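/- Let V be a real vector space with seminorms N_d, N and N_* satisfying N_d(v) ≤ N(v) ≤ N_*(v) for all v ∈ V, let V_h ⊆ V be a subspace, and let B_d, B_{rc} be bilinear forms on V with B = B_d + B_{rc}. Let u_0 ∈ V, and let u_h, P u_0 ∈ V_h. Suppose: (i) B(u_h, v_h) = L(v_h) for all v_h ∈ V_h, for a linear functional L on V_h; (ii) B_{rc}(u_0, v_h) = L(v_h) for all v_h ∈ V_h (consistency of the reduced problem), so that B(u_0 - u_h, v_h) = B_d(u_0, v_h) for all v_h ∈ V_h; (iii) coercivity, there is C_c > 0 with B(v_h, v_h) ≥ C_c · N(v_h)² for all v_h ∈ V_h; (iv) there is C_b^d ≥ 0 with |B_d(u_0, w_h)| ≤ C_b^d · N_d(u_0) · N_d(w_h) for all w_h ∈ V_h; (v) there is C_b ≥ 0 with |B(u_0 - P u_0, w_h)| ≤ C_b · N_*(u_0 - P u_0) · N(w_h) for all w_h ∈ V_h. Then N(u_h - u_0) ≤ (C_b^d / C_c) · N_d(u_0) + (1 + C_b / C_c) · N_*(u_0 - P u_0). -/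

import Mathlib

/-- Abstract version of the theorem relating the hybridized DG approximation `u_h`
to the solution `u₀` of the reduced (purely convective) problem:
`N(u_h - u₀) ≤ (C_b^d/C_c) N_d(u₀) + (1 + C_b/C_c) N_*(u₀ - P u₀)`. -/
theorem hdg_reduced_problem_bound {V : Type*} [AddCommGroup V] [Module ℝ V]
    (Nd N Ns : Seminorm ℝ V)
    (hNdN : ∀ v : V, Nd v ≤ N v) (hNNs : ∀ v : V, N v ≤ Ns v)
    (Vh : Submodule ℝ V)
    (Bd Brc : V →ₗ[ℝ] V →ₗ[ℝ] ℝ)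
    (B : V →ₗ[ℝ] V →ₗ[ℝ] ℝ) (hB : B = Bd + Brc)
    (u₀ uh Pu₀ : V) (huh : uh ∈ Vh) (hPu₀ : Pu₀ ∈ Vh)
    (L : Vh →ₗ[ℝ] ℝ)
    (Cc Cbd Cb : ℝ) (hCc : 0 < Cc) (hCbd : 0 ≤ Cbd) (hCb : 0 ≤ Cb)
    (hdisc : ∀ vh : Vh, B uh (vh : V) = L vh)
    (hcons : ∀ vh : Vh, Brc u₀ (vh : V) = L vh)
    (hcoer : ∀ vh ∈ Vh, B vh vh ≥ Cc * (N vh) ^ 2)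
    (hbddd : ∀ wh ∈ Vh, |Bd u₀ wh| ≤ Cbd * Nd u₀ * Nd wh)
    (hbdd : ∀ wh ∈ Vh, |B (u₀ - Pu₀) wh| ≤ Cb * Ns (u₀ - Pu₀) * N wh) :
    N (uh - u₀) ≤ (Cbd / Cc) * Nd u₀ + (1 + Cb / Cc) * Ns (u₀ - Pu₀) := by
  set e : V := uh - Pu₀ with he
  have heVh : e ∈ Vh := Submodule.sub_mem _ huh hPu₀
  -- B (uh - u₀) e = - Bd u₀ e
  have hgalerkin : B (uh - u₀) e = - Bd u₀ e := by
    have h1 : B uh e = L ⟨e, heVh⟩ := hdisc ⟨e, heVh⟩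
    have h2 : Brc u₀ e = L ⟨e, heVh⟩ := hcons ⟨e, heVh⟩
    have h3 : B u₀ e = Bd u₀ e + Brc u₀ e := by
      rw [hB]; simp
    have : B (uh - u₀) e = B uh e - B u₀ e := by
      simp [map_sub]
    rw [this, h1, h3, h2]; ring
  -- split B e e
  have hsplit : B e e = B (uh - u₀) e + B (u₀ - Pu₀) e := by
    have : (uh - u₀) + (u₀ - Pu₀) = e := by rw [he]; abel
    rw [← this]; simp [map_add]
  have hcoere := hcoer e heVh
  have key : Cc * (N e) ^ 2 ≤ (Cbd * Nd u₀ + Cb * Ns (u₀ - Pu₀)) * N e := by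
    calc Cc * (N e) ^ 2 ≤ B e e := hcoere
    _ = - Bd u₀ e + B (u₀ - Pu₀) e := by rw [hsplit, hgalerkin]
    _ ≤ |Bd u₀ e| + |B (u₀ - Pu₀) e| := by
        have := abs_nonneg (Bd u₀ e)
        have h1 : - Bd u₀ e ≤ |Bd u₀ e| := neg_le_abs _
        have h2 : B (u₀ - Pu₀) e ≤ |B (u₀ - Pu₀) e| := le_abs_self _
        linarith
    _ ≤ Cbd * Nd u₀ * Nd e + Cb * Ns (u₀ - Pu₀) * N e := by
        exact add_le_add (hbddd e heVh) (hbdd e heVh)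
    _ ≤ Cbd * Nd u₀ * N e + Cb * Ns (u₀ - Pu₀) * N e := by
        have := hNdN e
        have hnn : (0:ℝ) ≤ Cbd * Nd u₀ := mul_nonneg hCbd (apply_nonneg _ _)
        nlinarith [apply_nonneg Nd e]
    _ = (Cbd * Nd u₀ + Cb * Ns (u₀ - Pu₀)) * N e := by ring
  have hNe : N e ≤ (Cbd / Cc) * Nd u₀ + (Cb / Cc) * Ns (u₀ - Pu₀) := by
    rcases eq_or_lt_of_le (apply_nonneg N e) with h0 | hpos
    · rw [← h0]
      positivity
    · have key' : Cc * N e * N e ≤ (Cbd * Nd u₀ + Cb * Ns (u₀ - Pu₀)) * N e := by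
        rw [mul_assoc, ← sq]; exact key
      have : Cc * N e ≤ Cbd * Nd u₀ + Cb * Ns (u₀ - Pu₀) :=
        le_of_mul_le_mul_right key' hpos
      rw [div_mul_eq_mul_div, div_mul_eq_mul_div, ← add_div, le_div_iff₀ hCc]
      linarith [this]
  have htri : N (uh - u₀) ≤ N e + N (u₀ - Pu₀) := by
    have : uh - u₀ = e - (u₀ - Pu₀) := by rw [he]; abel
    rw [this]
    exact map_sub_le_add N _ _
  have hN2 : N (u₀ - Pu₀) ≤ Ns (u₀ - Pu₀) := hNNs _
  calc N (uh - u₀) ≤ N e + N (u₀ - Pu₀) := htri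
  _ ≤ ((Cbd / Cc) * Nd u₀ + (Cb / Cc) * Ns (u₀ - Pu₀)) + Ns (u₀ - Pu₀) := add_le_add hNe hN2
  _ = (Cbd / Cc) * Nd u₀ + (1 + Cb / Cc) * Ns (u₀ - Pu₀) := by ring
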